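/- For an integer q ≥ 2, the pair (q, q−1) is feasible if and only if q ∈ {2, 5, 7, 12, 47}. (Equivalently, using the identity 81·q(q+1)(q+2)(q+3) = (3q−1)(27q³ + 171q² + 354q + 280) + 280, feasibility of (q, q−1) forces β = q(q+1)(q+2)(q+3)/(3q−1) to be an even integer, which holds exactly for 3q−1 ∈ {5, 14, 20, 35, 140}.) -/

import Mathlib

/-- A pair `(q, c)` of positive integers is *feasible* for an SRNT graph if
`1 ≤ c ≤ q(q+1)`, `c` divides `q⁴ - q²`, `c + 2q` divides `q(q+1)(q+2)(q+3)`,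
and the integers `α = (q⁴ - q²)/c` and `β = q(q+1)(q+2)(q+3)/(c+2q)` have the
same parity. -/
def Feasible (q c : ℤ) : Prop :=
  0 < q ∧ 1 ≤ c ∧ c ≤ q * (q + 1) ∧
  c ∣ q ^ 4 - q ^ 2 ∧
  (c + 2 * q) ∣ q * (q + 1) * (q + 2) * (q + 3) ∧
  ((q ^ 4 - q ^ 2) / c) % 2 = (q * (q + 1) * (q + 2) * (q + 3) / (c + 2 * q)) % 2

/-- **Theorem 6 (case `c = q - 1`).**  For `q ≥ 2`, the pair `(q, q-1)` is
feasible iff `q ∈ {2, 5, 7, 12, 47}`. -/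
theorem srnt_theorem6_qminus1 (q : ℤ) (hq : 2 ≤ q) :
    Feasible q (q - 1) ↔ q = 2 ∨ q = 5 ∨ q = 7 ∨ q = 12 ∨ q = 47 := by
  constructor
  · rintro ⟨-, -, -, -, h5, h6⟩
    have hd : q - 1 + 2 * q = 3 * q - 1 := by ring
    rw [hd] at h5 h6
    have h280 : (3 * q - 1) ∣ 280 := by
      have h1 : (3 * q - 1) ∣ 81 * (q * (q + 1) * (q + 2) * (q + 3)) := h5.mul_left 81
      have h2 : (3 * q - 1) ∣ (3 * q - 1) * (27 * q ^ 3 + 171 * q ^ 2 + 354 * q + 280) :=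
        dvd_mul_right _ _
      have key : 81 * (q * (q + 1) * (q + 2) * (q + 3)) -
          (3 * q - 1) * (27 * q ^ 3 + 171 * q ^ 2 + 354 * q + 280) = 280 := by ring
      have := h1.sub h2
      rwa [key] at this
    have hle : 3 * q - 1 ≤ 280 := Int.le_of_dvd (by norm_num) h280
    have hq93 : q ≤ 93 := by omega
    interval_cases q <;> (try norm_num at h280) <;> (try norm_num at h6) <;> norm_num
  · rintro (rfl | rfl | rfl | rfl | rfl) <;>
      refine ⟨by norm_num, by norm_num, by norm_num, by norm_num, by norm_num, by norm_num⟩
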